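/- arXiv:2303.12357 — 3 statements merged into one kernel-verified Lean document; each statement's English description precedes it below -/
import Mathlib

section
/- For two discrete probability distributions u, v on {1,...,n}, the 1-Wasserstein distance (with ground metric |i-j|) equals the sum over i from 1 to n of the absolute difference of the partial sums: d_W(u,v) = Σ_{i=1}^n |Σ_{j=1}^i u_j − Σ_{j=1}^i v_j|. -/
open Finset

lemma overlap (a b s t : ℝ) (hab : a ≤ b) (hst : s ≤ t) :
    max 0 (min b t - max a s) = max a (min b t) - max a (min b s) := by
  rcases le_total a s with h1 | h1 <;> rcases le_total b t with h2 | h2 <;>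
    simp only [min_def, max_def] <;> split_ifs <;> linarith

noncomputable def cum (n : ℕ) (u : Fin n → ℝ) (k : ℕ) : ℝ :=
  ∑ j ∈ Finset.univ.filter (fun j : Fin n => (j : ℕ) < k), u j

lemma cum_zero (n : ℕ) (u : Fin n → ℝ) : cum n u 0 = 0 := by simp [cum]

lemma cum_top (n : ℕ) (u : Fin n → ℝ) : cum n u n = ∑ i, u i := by
  unfold cum
  congr 1
  exact Finset.filter_true_of_mem (fun j _ => j.isLt)

lemma cum_mono (n : ℕ) (u : Fin n → ℝ) (hu : ∀ i, 0 ≤ u i) {k l : ℕ} (h : k ≤ l) :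
    cum n u k ≤ cum n u l := by
  apply Finset.sum_le_sum_of_subset_of_nonneg
  · intro j hj
    simp only [Finset.mem_filter, Finset.mem_univ, true_and] at hj ⊢
    omega
  · exact fun i _ _ => hu i
  -- subset
lemma cum_nonneg (n : ℕ) (u : Fin n → ℝ) (hu : ∀ i, 0 ≤ u i) (k : ℕ) :
    0 ≤ cum n u k := Finset.sum_nonneg fun i _ => hu i

lemma cum_succ (n : ℕ) (u : Fin n → ℝ) (i : Fin n) :
    cum n u ((i : ℕ) + 1) = cum n u i + u i := by
  unfold cum
  have : Finset.univ.filter (fun j : Fin n => (j : ℕ) < (i : ℕ) + 1)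
      = insert i (Finset.univ.filter (fun j : Fin n => (j : ℕ) < (i : ℕ))) := by
    ext j; simp [Fin.ext_iff]; omega
  rw [this, Finset.sum_insert (by simp)]
  ring

noncomputable def mcoup (n : ℕ) (u v : Fin n → ℝ) : Fin n → Fin n → ℝ := fun i j =>
  max 0 (min (cum n u ((i : ℕ) + 1)) (cum n v ((j : ℕ) + 1)) - max (cum n u i) (cum n v j))

lemma mcoup_nonneg (n : ℕ) (u v : Fin n → ℝ) (i j : Fin n) : 0 ≤ mcoup n u v i j :=
  le_max_left _ _

lemma mcoup_symm (n : ℕ) (u v : Fin n → ℝ) (i j : Fin n) :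
    mcoup n u v i j = mcoup n v u j i := by
  unfold mcoup
  rw [min_comm, max_comm (cum n u i)]

lemma mcoup_row (n : ℕ) (u v : Fin n → ℝ) (hu : ∀ i, 0 ≤ u i) (hv : ∀ i, 0 ≤ v i)
    (hus : ∑ i, u i = 1) (hvs : ∑ i, v i = 1) (i : Fin n) :
    ∑ j : Fin n, mcoup n u v i j = u i := by
  set g : ℕ → ℝ := fun m => max (cum n u i) (min (cum n u ((i : ℕ) + 1)) (cum n v m)) with hg
  have key : ∀ j : Fin n, mcoup n u v i j = g ((j : ℕ) + 1) - g (j : ℕ) := by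
    intro j
    exact overlap _ _ _ _ (cum_mono n u hu (Nat.le_succ _)) (cum_mono n v hv (Nat.le_succ _))
  calc ∑ j : Fin n, mcoup n u v i j = ∑ j : Fin n, (g ((j : ℕ) + 1) - g (j : ℕ)) := by
        exact Finset.sum_congr rfl fun j _ => key j
    _ = ∑ m ∈ Finset.range n, (g (m + 1) - g m) :=
        Fin.sum_univ_eq_sum_range (fun m => g (m + 1) - g m) n
    _ = g n - g 0 := Finset.sum_range_sub g n
    _ = u i := by
        have h1 : g n = cum n u ((i : ℕ) + 1) := by
          rw [hg]
          simp only
          rw [cum_top n v, hvs]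
          rw [min_eq_left, max_eq_right (cum_mono n u hu (Nat.le_succ _))]
          calc cum n u ((i : ℕ) + 1) ≤ cum n u n := cum_mono n u hu i.isLt
            _ = 1 := by rw [cum_top n u, hus]
        have h2 : g 0 = cum n u (i : ℕ) := by
          rw [hg]
          simp only [cum_zero]
          rw [min_eq_right (cum_nonneg n u hu _), max_eq_left (cum_nonneg n u hu _)]
        rw [h1, h2, cum_succ]
        ring

lemma sum_ind (n m : ℕ) (h : m ≤ n) :
    ∑ k ∈ Finset.range n, (if m ≤ k then (1 : ℝ) else 0) = (n : ℝ) - m := by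
  have hf : (Finset.range n).filter (fun k => m ≤ k) = Finset.Ico m n := by
    ext k; simp [Finset.mem_range, Finset.mem_Ico]; omega
  rw [← Finset.sum_filter, hf]
  simp [Nat.card_Ico, Nat.cast_sub h]

lemma abs_sub_eq_sum_aux (n : ℕ) (i j : Fin n) (hij : (i : ℕ) ≤ (j : ℕ)) :
    |(i : ℝ) - (j : ℝ)| =
      ∑ k ∈ Finset.range n,
        |(if (i : ℕ) ≤ k then (1 : ℝ) else 0) - (if (j : ℕ) ≤ k then (1 : ℝ) else 0)| := by
  have key : ∀ k, |(if (i : ℕ) ≤ k then (1 : ℝ) else 0) - (if (j : ℕ) ≤ k then (1 : ℝ) else 0)|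
      = (if (i : ℕ) ≤ k then (1 : ℝ) else 0) - (if (j : ℕ) ≤ k then (1 : ℝ) else 0) := by
    intro k
    rw [abs_of_nonneg]
    split_ifs <;> simp <;> omega
  simp only [key]
  rw [Finset.sum_sub_distrib, sum_ind n i (le_of_lt i.isLt), sum_ind n j (le_of_lt j.isLt)]
  have hle : (i : ℝ) ≤ (j : ℝ) := by exact_mod_cast hij
  rw [abs_of_nonpos (by linarith)]
  ring

lemma abs_sub_eq_sum (n : ℕ) (i j : Fin n) :
    |(i : ℝ) - (j : ℝ)| =
      ∑ k ∈ Finset.range n,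
        |(if (i : ℕ) ≤ k then (1 : ℝ) else 0) - (if (j : ℕ) ≤ k then (1 : ℝ) else 0)| := by
  rcases le_total (i : ℕ) (j : ℕ) with h | h
  · exact abs_sub_eq_sum_aux n i j h
  · rw [abs_sub_comm, abs_sub_eq_sum_aux n j i h]
    exact Finset.sum_congr rfl fun k _ => (abs_sub_comm _ _)

noncomputable def Cs (n : ℕ) (γ : Fin n → Fin n → ℝ) (k : ℕ) : ℝ :=
  ∑ i : Fin n, ∑ j : Fin n,
    |(if (i : ℕ) ≤ k then (1 : ℝ) else 0) - (if (j : ℕ) ≤ k then (1 : ℝ) else 0)| * γ i j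

noncomputable def Ps (n : ℕ) (γ : Fin n → Fin n → ℝ) (k : ℕ) : ℝ :=
  ∑ i : Fin n, ∑ j : Fin n, (if (i : ℕ) ≤ k ∧ ¬ (j : ℕ) ≤ k then γ i j else 0)

noncomputable def Qs (n : ℕ) (γ : Fin n → Fin n → ℝ) (k : ℕ) : ℝ :=
  ∑ i : Fin n, ∑ j : Fin n, (if (j : ℕ) ≤ k ∧ ¬ (i : ℕ) ≤ k then γ i j else 0)

lemma Cs_eq (n : ℕ) (γ : Fin n → Fin n → ℝ) (k : ℕ) :
    Cs n γ k = Ps n γ k + Qs n γ k := by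
  unfold Cs Ps Qs
  rw [← Finset.sum_add_distrib]
  refine Finset.sum_congr rfl fun i _ => ?_
  rw [← Finset.sum_add_distrib]
  refine Finset.sum_congr rfl fun j _ => ?_
  split_ifs <;> simp_all <;> ring

lemma Ps_nonneg (n : ℕ) (γ : Fin n → Fin n → ℝ) (hγ : ∀ i j, 0 ≤ γ i j) (k : ℕ) :
    0 ≤ Ps n γ k := by
  refine Finset.sum_nonneg fun i _ => Finset.sum_nonneg fun j _ => ?_
  split_ifs
  · exact hγ i j
  · exact le_refl _

lemma Qs_nonneg (n : ℕ) (γ : Fin n → Fin n → ℝ) (hγ : ∀ i j, 0 ≤ γ i j) (k : ℕ) :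
    0 ≤ Qs n γ k := by
  refine Finset.sum_nonneg fun i _ => Finset.sum_nonneg fun j _ => ?_
  split_ifs
  · exact hγ i j
  · exact le_refl _

lemma cum_eq_ite_sum (n : ℕ) (u : Fin n → ℝ) (k : ℕ) :
    cum n u (k + 1) = ∑ i : Fin n, (if (i : ℕ) ≤ k then u i else 0) := by
  unfold cum
  rw [Finset.sum_filter]
  exact Finset.sum_congr rfl fun i _ => by split_ifs with h1 h2 <;> first | rfl | omega

lemma PQ_diff (n : ℕ) (γ : Fin n → Fin n → ℝ) (u v : Fin n → ℝ)
    (hrow : ∀ i : Fin n, ∑ j : Fin n, γ i j = u i)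
    (hcol : ∀ j : Fin n, ∑ i : Fin n, γ i j = v j) (k : ℕ) :
    Ps n γ k - Qs n γ k = cum n u (k + 1) - cum n v (k + 1) := by
  have key : Ps n γ k - Qs n γ k =
      (∑ i : Fin n, ∑ j : Fin n, (if (i : ℕ) ≤ k then γ i j else 0)) -
      (∑ i : Fin n, ∑ j : Fin n, (if (j : ℕ) ≤ k then γ i j else 0)) := by
    unfold Ps Qs
    rw [← Finset.sum_sub_distrib, ← Finset.sum_sub_distrib]
    refine Finset.sum_congr rfl fun i _ => ?_
    rw [← Finset.sum_sub_distrib, ← Finset.sum_sub_distrib]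
    refine Finset.sum_congr rfl fun j _ => ?_
    split_ifs <;> simp_all <;> ring
  have h1 : (∑ i : Fin n, ∑ j : Fin n, (if (i : ℕ) ≤ k then γ i j else 0))
      = cum n u (k + 1) := by
    rw [cum_eq_ite_sum]
    refine Finset.sum_congr rfl fun i _ => ?_
    rw [← hrow i]
    split_ifs <;> simp
  have h2 : (∑ i : Fin n, ∑ j : Fin n, (if (j : ℕ) ≤ k then γ i j else 0))
      = cum n v (k + 1) := by
    rw [Finset.sum_comm, cum_eq_ite_sum]
    refine Finset.sum_congr rfl fun j _ => ?_
    rw [← hcol j]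
    split_ifs <;> simp
  rw [key, h1, h2]

lemma abs_le_Cs (n : ℕ) (γ : Fin n → Fin n → ℝ) (u v : Fin n → ℝ)
    (hγ : ∀ i j, 0 ≤ γ i j)
    (hrow : ∀ i : Fin n, ∑ j : Fin n, γ i j = u i)
    (hcol : ∀ j : Fin n, ∑ i : Fin n, γ i j = v j) (k : ℕ) :
    |cum n u (k + 1) - cum n v (k + 1)| ≤ Cs n γ k := by
  rw [← PQ_diff n γ u v hrow hcol k, Cs_eq]
  have hP := Ps_nonneg n γ hγ k
  have hQ := Qs_nonneg n γ hγ k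
  rw [abs_le]
  constructor <;> linarith

lemma Cs_mcoup (n : ℕ) (u v : Fin n → ℝ) (hu : ∀ i, 0 ≤ u i) (hv : ∀ i, 0 ≤ v i)
    (hus : ∑ i, u i = 1) (hvs : ∑ i, v i = 1) (k : ℕ) :
    Cs n (mcoup n u v) k = |cum n u (k + 1) - cum n v (k + 1)| := by
  have hrow := mcoup_row n u v hu hv hus hvs
  have hcol : ∀ j : Fin n, ∑ i : Fin n, mcoup n u v i j = v j := by
    intro j
    calc ∑ i : Fin n, mcoup n u v i j = ∑ i : Fin n, mcoup n v u j i :=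
          Finset.sum_congr rfl fun i _ => mcoup_symm n u v i j
      _ = v j := mcoup_row n v u hv hu hvs hus j
  have hdiff := PQ_diff n (mcoup n u v) u v hrow hcol k
  rcases le_total (cum n v (k + 1)) (cum n u (k + 1)) with hc | hc
  · have hQ : Qs n (mcoup n u v) k = 0 := by
      unfold Qs
      refine Finset.sum_eq_zero fun i _ => Finset.sum_eq_zero fun j _ => ?_
      split_ifs with h
      · unfold mcoup
        rw [max_eq_left]
        have h1 : cum n v ((j : ℕ) + 1) ≤ cum n v (k + 1) := cum_mono n v hv (by omega)
        have h2 : cum n u (k + 1) ≤ cum n u (i : ℕ) := cum_mono n u hu (by omega)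
        have h3 : min (cum n u ((i : ℕ) + 1)) (cum n v ((j : ℕ) + 1)) ≤ cum n v ((j : ℕ) + 1) :=
          min_le_right _ _
        have h4 : cum n u (i : ℕ) ≤ max (cum n u (i : ℕ)) (cum n v (j : ℕ)) := le_max_left _ _
        linarith
      · rfl
    rw [Cs_eq, hQ]
    rw [hQ] at hdiff
    rw [abs_of_nonneg (by linarith)]
    linarith
  · have hP : Ps n (mcoup n u v) k = 0 := by
      unfold Ps
      refine Finset.sum_eq_zero fun i _ => Finset.sum_eq_zero fun j _ => ?_
      split_ifs with h
      · unfold mcoup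
        rw [max_eq_left]
        have h1 : cum n u ((i : ℕ) + 1) ≤ cum n u (k + 1) := cum_mono n u hu (by omega)
        have h2 : cum n v (k + 1) ≤ cum n v (j : ℕ) := cum_mono n v hv (by omega)
        have h3 : min (cum n u ((i : ℕ) + 1)) (cum n v ((j : ℕ) + 1)) ≤ cum n u ((i : ℕ) + 1) :=
          min_le_left _ _
        have h4 : cum n v (j : ℕ) ≤ max (cum n u (i : ℕ)) (cum n v (j : ℕ)) := le_max_right _ _
        linarith
      · rfl
    rw [Cs_eq, hP]
    rw [hP] at hdiff
    rw [abs_of_nonpos (by linarith)]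
    linarith

lemma cost_eq_sum_Cs (n : ℕ) (γ : Fin n → Fin n → ℝ) :
    ∑ i : Fin n, ∑ j : Fin n, |(i : ℝ) - (j : ℝ)| * γ i j
      = ∑ k ∈ Finset.range n, Cs n γ k := by
  unfold Cs
  have h1 : ∀ i j : Fin n, |(i : ℝ) - (j : ℝ)| * γ i j = ∑ k ∈ Finset.range n,
      |(if (i : ℕ) ≤ k then (1 : ℝ) else 0) - (if (j : ℕ) ≤ k then (1 : ℝ) else 0)| * γ i j :=
    fun i j => by rw [abs_sub_eq_sum n i j, Finset.sum_mul]
  calc ∑ i : Fin n, ∑ j : Fin n, |(i : ℝ) - (j : ℝ)| * γ i j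
      = ∑ i : Fin n, ∑ j : Fin n, ∑ k ∈ Finset.range n,
        |(if (i : ℕ) ≤ k then (1 : ℝ) else 0) - (if (j : ℕ) ≤ k then (1 : ℝ) else 0)| * γ i j :=
        Finset.sum_congr rfl fun i _ => Finset.sum_congr rfl fun j _ => h1 i j
    _ = ∑ i : Fin n, ∑ k ∈ Finset.range n, ∑ j : Fin n,
        |(if (i : ℕ) ≤ k then (1 : ℝ) else 0) - (if (j : ℕ) ≤ k then (1 : ℝ) else 0)| * γ i j :=
        Finset.sum_congr rfl fun i _ => Finset.sum_comm
    _ = ∑ k ∈ Finset.range n, ∑ i : Fin n, ∑ j : Fin n,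
        |(if (i : ℕ) ≤ k then (1 : ℝ) else 0) - (if (j : ℕ) ≤ k then (1 : ℝ) else 0)| * γ i j :=
        Finset.sum_comm

lemma Iic_sum_eq (n : ℕ) (u : Fin n → ℝ) (i : Fin n) :
    ∑ j ∈ Finset.Iic i, u j = cum n u ((i : ℕ) + 1) := by
  unfold cum
  congr 1
  ext j
  simp only [Finset.mem_Iic, Finset.mem_filter, Finset.mem_univ, true_and, Fin.le_def]
  omega

lemma rhs_eq (n : ℕ) (u v : Fin n → ℝ) :
    ∑ i : Fin n, |(∑ j ∈ Finset.Iic i, u j) - ∑ j ∈ Finset.Iic i, v j|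
      = ∑ k ∈ Finset.range n, |cum n u (k + 1) - cum n v (k + 1)| := by
  rw [← Fin.sum_univ_eq_sum_range (fun m => |cum n u (m + 1) - cum n v (m + 1)|) n]
  exact Finset.sum_congr rfl fun i _ => by rw [Iic_sum_eq, Iic_sum_eq]

/-- The 1-Wasserstein distance between two discrete probability distributions on
`{1,...,n}` with ground metric `|i-j|`, defined as the infimum of coupling costs,
equals the sum of absolute differences of cumulative sums. -/
theorem wasserstein_eq_cumsum (n : ℕ) (u v : Fin n → ℝ)
    (hu : ∀ i, 0 ≤ u i) (hv : ∀ i, 0 ≤ v i)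
    (hus : ∑ i, u i = 1) (hvs : ∑ i, v i = 1) :
    sInf {c : ℝ | ∃ γ : Fin n → Fin n → ℝ,
        (∀ i j, 0 ≤ γ i j) ∧
        (∀ i : Fin n, ∑ j : Fin n, γ i j = u i) ∧
        (∀ j : Fin n, ∑ i : Fin n, γ i j = v j) ∧
        c = ∑ i : Fin n, ∑ j : Fin n, |(i : ℝ) - (j : ℝ)| * γ i j} =
      ∑ i, |(∑ j ∈ Finset.Iic i, u j) - ∑ j ∈ Finset.Iic i, v j| := by
  set S := ∑ i : Fin n, |(∑ j ∈ Finset.Iic i, u j) - ∑ j ∈ Finset.Iic i, v j| with hS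
  have hcol : ∀ j : Fin n, ∑ i : Fin n, mcoup n u v i j = v j := by
    intro j
    calc ∑ i : Fin n, mcoup n u v i j = ∑ i : Fin n, mcoup n v u j i :=
          Finset.sum_congr rfl fun i _ => mcoup_symm n u v i j
      _ = v j := mcoup_row n v u hv hu hvs hus j
  have hmem : S ∈ {c : ℝ | ∃ γ : Fin n → Fin n → ℝ,
        (∀ i j, 0 ≤ γ i j) ∧
        (∀ i : Fin n, ∑ j : Fin n, γ i j = u i) ∧
        (∀ j : Fin n, ∑ i : Fin n, γ i j = v j) ∧
        c = ∑ i : Fin n, ∑ j : Fin n, |(i : ℝ) - (j : ℝ)| * γ i j} := by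
    refine ⟨mcoup n u v, mcoup_nonneg n u v, mcoup_row n u v hu hv hus hvs, hcol, ?_⟩
    rw [cost_eq_sum_Cs, hS, rhs_eq]
    exact (Finset.sum_congr rfl fun k _ => Cs_mcoup n u v hu hv hus hvs k).symm
  have hlb : ∀ c ∈ {c : ℝ | ∃ γ : Fin n → Fin n → ℝ,
        (∀ i j, 0 ≤ γ i j) ∧
        (∀ i : Fin n, ∑ j : Fin n, γ i j = u i) ∧
        (∀ j : Fin n, ∑ i : Fin n, γ i j = v j) ∧
        c = ∑ i : Fin n, ∑ j : Fin n, |(i : ℝ) - (j : ℝ)| * γ i j}, S ≤ c := by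
    rintro c ⟨γ, hγ, hrow, hcol', rfl⟩
    rw [cost_eq_sum_Cs, hS, rhs_eq]
    exact Finset.sum_le_sum fun k _ => abs_le_Cs n γ u v hγ hrow hcol' k
  exact le_antisymm (csInf_le ⟨S, hlb⟩ hmem) (le_csInf ⟨S, hmem⟩ hlb)
end

section
/- Let u be a discrete signal of length n and let v be obtained from u by moving mass m ≥ 0 from position i to position k (i.e., v_i = u_i − m, v_k = u_k + m, v_j = u_j otherwise). Then the cumulative-sum Wasserstein distance satisfies d_W(u, v) = m · |k − i|. -/
open Finset

/-- Moving mass `m ≥ 0` from position `i` to position `k` incurs cumulative-sum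
Wasserstein cost exactly `m · |k − i|`. -/
theorem cumsum_dist_move_mass (n : ℕ) (u : Fin n → ℝ) (i k : Fin n) (m : ℝ)
    (hm : 0 ≤ m) :
    ∑ p, |(∑ j ∈ Finset.Iic p, u j) -
        ∑ j ∈ Finset.Iic p,
          (u j + (if j = k then m else 0) - (if j = i then m else 0))| =
      m * |(k : ℝ) - (i : ℝ)| := by
  have habs : ∀ p : Fin n,
      |(∑ j ∈ Finset.Iic p, u j) -
        ∑ j ∈ Finset.Iic p,
          (u j + (if j = k then m else 0) - (if j = i then m else 0))|
      = |(if i ≤ p then m else 0) - (if k ≤ p then m else 0)| := by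
    intro p
    congr 1
    rw [Finset.sum_sub_distrib, Finset.sum_add_distrib,
      Finset.sum_ite_eq' (Finset.Iic p) k, Finset.sum_ite_eq' (Finset.Iic p) i]
    simp only [Finset.mem_Iic]
    ring
  simp only [habs]
  have key : ∀ (a b : Fin n), a ≤ b →
      ∑ p : Fin n, |(if a ≤ p then m else 0) - (if b ≤ p then m else 0)|
        = m * ((b : ℕ) - (a : ℕ) : ℕ) := by
    intro a b hab
    have h1 : ∀ p : Fin n,
        |(if a ≤ p then m else 0) - (if b ≤ p then m else 0)|
          = if p ∈ Finset.Ico a b then m else 0 := by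
      intro p
      by_cases h2 : b ≤ p
      · have h1 : a ≤ p := hab.trans h2
        simp [Finset.mem_Ico, h1, h2, not_lt.mpr h2]
      · by_cases h1 : a ≤ p
        · simp [Finset.mem_Ico, h1, h2, not_le.mp h2, abs_of_nonneg hm]
        · simp [Finset.mem_Ico, h1, h2]
    simp only [h1]
    rw [Finset.sum_ite_mem, Finset.univ_inter, Finset.sum_const, Fin.card_Ico,
      nsmul_eq_mul, mul_comm]
  rcases le_total i k with h | h
  · rw [key i k h, Nat.cast_sub (by exact_mod_cast h),
      abs_of_nonneg (sub_nonneg.mpr (by exact_mod_cast h))]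
  · have : ∀ p : Fin n,
        |(if i ≤ p then m else 0) - (if k ≤ p then m else 0)|
          = |(if k ≤ p then m else 0) - (if i ≤ p then m else 0)| := fun p =>
      abs_sub_comm _ _
    simp only [this]
    rw [key k i h, Nat.cast_sub (by exact_mod_cast h),
      abs_of_nonpos (sub_nonpos.mpr (by exact_mod_cast h))]
    ring
end

section
/- For a one-dimensional Laplace distribution with scale σ, the smoothed classifier obtained by averaging an indicator function h : ℝ → [0,1] over Laplace(t, σ) noise, g(t) = E_{δ~Laplace(0,σ)}[h(t+δ)], satisfies the multiplicative Lipschitz property: for all t, t' ∈ ℝ, g(t') ≥ e^{−|t−t'|/σ} g(t). -/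
open MeasureTheory Real Set Filter

lemma integrable_exp_neg_abs_div (σ : ℝ) (hσ : 0 < σ) :
    Integrable (fun x : ℝ => Real.exp (-|x| / σ)) := by
  have hb : (0:ℝ) < σ⁻¹ := inv_pos.2 hσ
  have hcont : Continuous (fun x : ℝ => Real.exp (-|x| / σ)) := by
    continuity
  refine hcont.locallyIntegrable.integrable_of_isBigO_atTop_of_norm_isNegInvariant
    (Eventually.of_forall fun x => by simp [Function.comp, abs_neg])
    (g := fun x => Real.exp (-σ⁻¹ * x)) ?_ ?_
  · refine Filter.EventuallyEq.isBigO ?_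
    filter_upwards [eventually_ge_atTop (0:ℝ)] with x hx
    rw [abs_of_nonneg hx]
    ring_nf
  · exact ⟨Ioi 0, Ioi_mem_atTop 0, exp_neg_integrableOn_Ioi 0 hb⟩

/-- Laplace smoothing of a `[0,1]`-valued function yields a multiplicatively
Lipschitz function: `g(t') ≥ e^{−|t−t'|/σ} g(t)`. -/
theorem laplace_smoothing_multiplicative_lipschitz (σ : ℝ) (hσ : 0 < σ)
    (h : ℝ → ℝ) (hmeas : Measurable h) (hrange : ∀ x, 0 ≤ h x ∧ h x ≤ 1)
    (t t' : ℝ) :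
    (∫ δ : ℝ, h (t' + δ) * (1 / (2 * σ) * Real.exp (-|δ| / σ))) ≥
      Real.exp (-|t - t'| / σ) *
        ∫ δ : ℝ, h (t + δ) * (1 / (2 * σ) * Real.exp (-|δ| / σ)) := by
  set c := t - t' with hc
  have hexp := integrable_exp_neg_abs_div σ hσ
  have hpos : (0:ℝ) < 1 / (2 * σ) := by positivity
  -- generic integrability
  have hint : ∀ s : ℝ,
      Integrable (fun δ : ℝ => h (s + δ) * (1 / (2 * σ) * Real.exp (-|δ| / σ))) := by
    intro s
    refine Integrable.mono' (hexp.const_mul (1 / (2 * σ))) ?_ ?_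
    · exact ((hmeas.comp (measurable_const_add s)).mul
        ((measurable_id.abs.neg.div_const σ).exp.const_mul _)).aestronglyMeasurable
    · filter_upwards with x
      have h0 := (hrange (s + x)).1
      have h1 := (hrange (s + x)).2
      have hp : (0:ℝ) ≤ 1 / (2 * σ) * Real.exp (-|x| / σ) := by positivity
      rw [Real.norm_eq_abs, abs_of_nonneg (mul_nonneg h0 hp)]
      exact mul_le_of_le_one_left hp h1
  have I1 := hint t
  have I1' := hint t'
  -- translated integrand
  have I2 : Integrable (fun δ : ℝ => h (t + δ) * (1 / (2 * σ) * Real.exp (-|δ + c| / σ))) := by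
    have := I1'.comp_add_right c
    refine this.congr (Eventually.of_forall fun x => ?_)
    have : t' + (x + c) = t + x := by rw [hc]; ring
    simp only [this]
  -- change of variables
  have hshift :
      (∫ δ : ℝ, h (t' + δ) * (1 / (2 * σ) * Real.exp (-|δ| / σ)))
        = ∫ δ : ℝ, h (t + δ) * (1 / (2 * σ) * Real.exp (-|δ + c| / σ)) := by
    rw [← integral_add_right_eq_self
      (fun δ : ℝ => h (t' + δ) * (1 / (2 * σ) * Real.exp (-|δ| / σ))) c]
    refine integral_congr_ae (Eventually.of_forall fun x => ?_)
    have : t' + (x + c) = t + x := by rw [hc]; ring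
    simp only [this]
  rw [hshift, ge_iff_le, ← integral_const_mul]
  refine integral_mono (I1.const_mul _) I2 fun x => ?_
  simp only
  rw [mul_comm (Real.exp (-|c| / σ)), mul_assoc]
  refine mul_le_mul_of_nonneg_left ?_ (hrange (t + x)).1
  rw [mul_assoc]
  refine mul_le_mul_of_nonneg_left ?_ hpos.le
  rw [← Real.exp_add, Real.exp_le_exp, ← add_div, div_le_div_iff_of_pos_right hσ]
  have := abs_add_le x c
  linarith [abs_nonneg c]
end
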